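/- For fixed nonnegative constants A, B, C, ν, μ and p > 0, σ > 0, the function r(d_i, d_a) = log₂(1 + (A·d_i^{−ν} + B·d_i^{−ν/2}·d_a^{−μ/2} + C·d_a^{−μ})·p/σ²) is a convex function of (d_i, d_a) on (0, ∞) × (0, ∞). -/

import Mathlib

open Real

private lemma convpos {a b x y : ℝ} (ha : 0 ≤ a) (hb : 0 ≤ b) (hab : a + b = 1)
    (hx : 0 < x) (hy : 0 < y) : 0 < a * x + b * y := by
  rcases ha.eq_or_lt with rfl | ha'
  · have hb1 : b = 1 := by linarith
    simpa [hb1] using hy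
  · have h1 : 0 < a * x := mul_pos ha' hx
    have h2 : 0 ≤ b * y := mul_nonneg hb hy.le
    linarith

/-- weighted AM-GM then antitone negative power -/
private lemma amgm_rpow {a b x y : ℝ} (ha : 0 ≤ a) (hb : 0 ≤ b) (hab : a + b = 1)
    (hx : 0 < x) (hy : 0 < y) {e : ℝ} (he : e ≤ 0) :
    (a * x + b * y) ^ e ≤ x ^ (e * a) * y ^ (e * b) := by
  have hgm : x ^ a * y ^ b ≤ a * x + b * y :=
    Real.geom_mean_le_arith_mean2_weighted ha hb hx.le hy.le hab
  have hpos : 0 < x ^ a * y ^ b :=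
    mul_pos (Real.rpow_pos_of_pos hx a) (Real.rpow_pos_of_pos hy b)
  calc (a * x + b * y) ^ e ≤ (x ^ a * y ^ b) ^ e :=
        Real.rpow_le_rpow_of_nonpos hpos hgm he
    _ = x ^ (e * a) * y ^ (e * b) := by
        rw [Real.mul_rpow (Real.rpow_pos_of_pos hx a).le (Real.rpow_pos_of_pos hy b).le,
          ← Real.rpow_mul hx.le, ← Real.rpow_mul hy.le, mul_comm a e, mul_comm b e]

/-- each term `c · s^{e₁} · t^{e₂}` is log-convex -/
private lemma term_ineq {a b x₁ x₂ y₁ y₂ c e₁ e₂ : ℝ} (ha : 0 ≤ a) (hb : 0 ≤ b)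
    (hab : a + b = 1) (hx₁ : 0 < x₁) (hx₂ : 0 < x₂) (hy₁ : 0 < y₁) (hy₂ : 0 < y₂)
    (hc : 0 ≤ c) (he₁ : e₁ ≤ 0) (he₂ : e₂ ≤ 0) :
    c * (a * x₁ + b * y₁) ^ e₁ * (a * x₂ + b * y₂) ^ e₂ ≤
      (c * x₁ ^ e₁ * x₂ ^ e₂) ^ a * (c * y₁ ^ e₁ * y₂ ^ e₂) ^ b := by
  have h1 := amgm_rpow ha hb hab hx₁ hy₁ he₁
  have h2 := amgm_rpow ha hb hab hx₂ hy₂ he₂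
  have hcab : c ^ a * c ^ b = c := by
    rw [← Real.rpow_add' hc (by rw [hab]; norm_num), hab, Real.rpow_one]
  have hexp : (c * x₁ ^ e₁ * x₂ ^ e₂) ^ a * (c * y₁ ^ e₁ * y₂ ^ e₂) ^ b
      = c * (x₁ ^ (e₁ * a) * y₁ ^ (e₁ * b)) * (x₂ ^ (e₂ * a) * y₂ ^ (e₂ * b)) := by
    rw [Real.mul_rpow (by positivity) (Real.rpow_pos_of_pos hx₂ e₂).le,
      Real.mul_rpow hc (Real.rpow_pos_of_pos hx₁ e₁).le,
      Real.mul_rpow (by positivity) (Real.rpow_pos_of_pos hy₂ e₂).le,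
      Real.mul_rpow hc (Real.rpow_pos_of_pos hy₁ e₁).le,
      ← Real.rpow_mul hx₁.le, ← Real.rpow_mul hx₂.le,
      ← Real.rpow_mul hy₁.le, ← Real.rpow_mul hy₂.le]
    linear_combination (x₁ ^ (e₁ * a) * y₁ ^ (e₁ * b) * x₂ ^ (e₂ * a) * y₂ ^ (e₂ * b)) * hcab
  rw [hexp]
  have hm₁ : 0 < a * x₁ + b * y₁ := convpos ha hb hab hx₁ hy₁
  have hm₂ : 0 < a * x₂ + b * y₂ := convpos ha hb hab hx₂ hy₂
  have step1 : c * (a * x₁ + b * y₁) ^ e₁ * (a * x₂ + b * y₂) ^ e₂ ≤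
      c * (x₁ ^ (e₁ * a) * y₁ ^ (e₁ * b)) * (a * x₂ + b * y₂) ^ e₂ := by
    have := mul_le_mul_of_nonneg_left h1 hc
    exact mul_le_mul_of_nonneg_right this (Real.rpow_pos_of_pos hm₂ e₂).le
  refine step1.trans ?_
  exact mul_le_mul_of_nonneg_left h2 (by positivity)

/-- two-term Hölder inequality -/
private lemma holder2 {a b u v u' v' : ℝ} (ha : 0 ≤ a) (hb : 0 ≤ b) (hab : a + b = 1)
    (hu : 0 ≤ u) (hv : 0 ≤ v) (hu' : 0 ≤ u') (hv' : 0 ≤ v') :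
    u ^ a * v ^ b + u' ^ a * v' ^ b ≤ (u + u') ^ a * (v + v') ^ b := by
  rcases ha.eq_or_lt with rfl | ha'
  · have hb1 : b = 1 := by linarith
    simp [hb1, Real.rpow_zero, Real.rpow_one]
  rcases hb.eq_or_lt with rfl | hb'
  · have ha1 : a = 1 := by linarith
    simp [ha1, Real.rpow_zero, Real.rpow_one]
  rcases eq_or_lt_of_le (by positivity : (0:ℝ) ≤ u + u') with hU | hU
  · have hu0 : u = 0 := by linarith
    have hu'0 : u' = 0 := by linarith
    simp [hu0, hu'0, Real.zero_rpow ha'.ne', mul_nonneg, Real.rpow_nonneg, hv, hv']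
  rcases eq_or_lt_of_le (by positivity : (0:ℝ) ≤ v + v') with hV | hV
  · have hv0 : v = 0 := by linarith
    have hv'0 : v' = 0 := by linarith
    simp [hv0, hv'0, Real.zero_rpow hb'.ne', mul_nonneg, Real.rpow_nonneg]
  have e1 : u ^ a = (u / (u + u')) ^ a * (u + u') ^ a := by
    rw [← Real.mul_rpow (by positivity) hU.le, div_mul_cancel₀ _ hU.ne']
  have e2 : v ^ b = (v / (v + v')) ^ b * (v + v') ^ b := by
    rw [← Real.mul_rpow (by positivity) hV.le, div_mul_cancel₀ _ hV.ne']
  have e1' : u' ^ a = (u' / (u + u')) ^ a * (u + u') ^ a := by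
    rw [← Real.mul_rpow (by positivity) hU.le, div_mul_cancel₀ _ hU.ne']
  have e2' : v' ^ b = (v' / (v + v')) ^ b * (v + v') ^ b := by
    rw [← Real.mul_rpow (by positivity) hV.le, div_mul_cancel₀ _ hV.ne']
  have gm : (u / (u + u')) ^ a * (v / (v + v')) ^ b ≤
      a * (u / (u + u')) + b * (v / (v + v')) :=
    Real.geom_mean_le_arith_mean2_weighted ha hb (by positivity) (by positivity) hab
  have gm' : (u' / (u + u')) ^ a * (v' / (v + v')) ^ b ≤
      a * (u' / (u + u')) + b * (v' / (v + v')) :=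
    Real.geom_mean_le_arith_mean2_weighted ha hb (by positivity) (by positivity) hab
  have hUV : 0 ≤ (u + u') ^ a * (v + v') ^ b := by positivity
  have h1 : u ^ a * v ^ b ≤
      (a * (u / (u + u')) + b * (v / (v + v'))) * ((u + u') ^ a * (v + v') ^ b) := by
    calc u ^ a * v ^ b
        = ((u / (u + u')) ^ a * (v / (v + v')) ^ b) * ((u + u') ^ a * (v + v') ^ b) := by
          rw [e1, e2]; ring
      _ ≤ _ := mul_le_mul_of_nonneg_right gm hUV
  have h2 : u' ^ a * v' ^ b ≤
      (a * (u' / (u + u')) + b * (v' / (v + v'))) * ((u + u') ^ a * (v + v') ^ b) := by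
    calc u' ^ a * v' ^ b
        = ((u' / (u + u')) ^ a * (v' / (v + v')) ^ b) * ((u + u') ^ a * (v + v') ^ b) := by
          rw [e1', e2']; ring
      _ ≤ _ := mul_le_mul_of_nonneg_right gm' hUV
  have hsumu : u / (u + u') + u' / (u + u') = 1 := by
    rw [← add_div, div_self hU.ne']
  have hsumv : v / (v + v') + v' / (v + v') = 1 := by
    rw [← add_div, div_self hV.ne']
  have hcoef : (a * (u / (u + u')) + b * (v / (v + v')))
      + (a * (u' / (u + u')) + b * (v' / (v + v'))) = 1 := by
    linear_combination a * hsumu + b * hsumv + hab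
  calc u ^ a * v ^ b + u' ^ a * v' ^ b
      ≤ ((a * (u / (u + u')) + b * (v / (v + v')))
        + (a * (u' / (u + u')) + b * (v' / (v + v')))) * ((u + u') ^ a * (v + v') ^ b) := by
        rw [add_mul]; exact add_le_add h1 h2
    _ = (u + u') ^ a * (v + v') ^ b := by rw [hcoef, one_mul]

theorem stmt_1 (A B C ν μ p σ : ℝ) (hA : 0 ≤ A) (hB : 0 ≤ B) (hC : 0 ≤ C)
    (hν : 0 ≤ ν) (hμ : 0 ≤ μ) (hp : 0 < p) (hσ : 0 < σ) :
    ConvexOn ℝ ((Set.Ioi (0 : ℝ)) ×ˢ (Set.Ioi (0 : ℝ)))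
      (fun d : ℝ × ℝ =>
        Real.logb 2 (1 + (A * d.1 ^ (-ν) + B * d.1 ^ (-ν / 2) * d.2 ^ (-μ / 2)
          + C * d.2 ^ (-μ)) * (p / σ ^ 2))) := by
  have hk : 0 < p / σ ^ 2 := by positivity
  set k := p / σ ^ 2 with hkdef
  refine ⟨(convex_Ioi (0:ℝ)).prod (convex_Ioi 0), ?_⟩
  rintro ⟨x₁, x₂⟩ ⟨hx₁, hx₂⟩ ⟨y₁, y₂⟩ ⟨hy₁, hy₂⟩ a b ha hb hab
  simp only [Set.mem_Ioi] at hx₁ hx₂ hy₁ hy₂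
  simp only [Prod.smul_mk, Prod.mk_add_mk, smul_eq_mul]
  set m₁ := a * x₁ + b * y₁ with hm₁def
  set m₂ := a * x₂ + b * y₂ with hm₂def
  have hm₁ : 0 < m₁ := convpos ha hb hab hx₁ hy₁
  have hm₂ : 0 < m₂ := convpos ha hb hab hx₂ hy₂
  -- the three terms, scaled by k
  set Gx := 1 + (A * x₁ ^ (-ν) + B * x₁ ^ (-ν / 2) * x₂ ^ (-μ / 2) + C * x₂ ^ (-μ)) * k
    with hGxdef
  set Gy := 1 + (A * y₁ ^ (-ν) + B * y₁ ^ (-ν / 2) * y₂ ^ (-μ / 2) + C * y₂ ^ (-μ)) * k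
    with hGydef
  set Gm := 1 + (A * m₁ ^ (-ν) + B * m₁ ^ (-ν / 2) * m₂ ^ (-μ / 2) + C * m₂ ^ (-μ)) * k
    with hGmdef
  have hGx : 0 < Gx := by
    have : 0 ≤ (A * x₁ ^ (-ν) + B * x₁ ^ (-ν / 2) * x₂ ^ (-μ / 2) + C * x₂ ^ (-μ)) * k := by
      positivity
    rw [hGxdef]; linarith
  have hGy : 0 < Gy := by
    have : 0 ≤ (A * y₁ ^ (-ν) + B * y₁ ^ (-ν / 2) * y₂ ^ (-μ / 2) + C * y₂ ^ (-μ)) * k := by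
      positivity
    rw [hGydef]; linarith
  have hGm : 0 < Gm := by
    have : 0 ≤ (A * m₁ ^ (-ν) + B * m₁ ^ (-ν / 2) * m₂ ^ (-μ / 2) + C * m₂ ^ (-μ)) * k := by
      positivity
    rw [hGmdef]; linarith
  -- log-convexity inequality  Gm ≤ Gx^a * Gy^b
  have key : Gm ≤ Gx ^ a * Gy ^ b := by
    have hAk : 0 ≤ A * k := mul_nonneg hA hk.le
    have hBk : 0 ≤ B * k := mul_nonneg hB hk.le
    have hCk : 0 ≤ C * k := mul_nonneg hC hk.le
    have t1 := term_ineq (c := A * k) (e₁ := -ν) (e₂ := 0) ha hb hab hx₁ hx₂ hy₁ hy₂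
      hAk (by linarith) le_rfl
    have t2 := term_ineq (c := B * k) (e₁ := -ν / 2) (e₂ := -μ / 2) ha hb hab hx₁ hx₂ hy₁ hy₂
      hBk (by linarith) (by linarith)
    have t3 := term_ineq (c := C * k) (e₁ := 0) (e₂ := -μ) ha hb hab hx₁ hx₂ hy₁ hy₂
      hCk le_rfl (by linarith)
    simp only [Real.rpow_zero, mul_one, one_mul] at t1 t2 t3
    -- abbreviate the terms
    set T1x := A * k * x₁ ^ (-ν) with hT1x
    set T2x := B * k * x₁ ^ (-ν / 2) * x₂ ^ (-μ / 2) with hT2x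
    set T3x := C * k * x₂ ^ (-μ) with hT3x
    set T1y := A * k * y₁ ^ (-ν) with hT1y
    set T2y := B * k * y₁ ^ (-ν / 2) * y₂ ^ (-μ / 2) with hT2y
    set T3y := C * k * y₂ ^ (-μ) with hT3y
    have hT1x0 : 0 ≤ T1x := by positivity
    have hT2x0 : 0 ≤ T2x := by positivity
    have hT3x0 : 0 ≤ T3x := by positivity
    have hT1y0 : 0 ≤ T1y := by positivity
    have hT2y0 : 0 ≤ T2y := by positivity
    have hT3y0 : 0 ≤ T3y := by positivity
    have hone : (1:ℝ) = 1 ^ a * 1 ^ b := by simp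
    have hGmexp : Gm = 1 + A * k * m₁ ^ (-ν) + B * k * m₁ ^ (-ν / 2) * m₂ ^ (-μ / 2)
        + C * k * m₂ ^ (-μ) := by rw [hGmdef]; ring
    have hGxexp : Gx = 1 + T1x + T2x + T3x := by
      rw [hGxdef, hT1x, hT2x, hT3x]; ring
    have hGyexp : Gy = 1 + T1y + T2y + T3y := by
      rw [hGydef, hT1y, hT2y, hT3y]; ring
    have step0 : Gm ≤ 1 ^ a * 1 ^ b + T1x ^ a * T1y ^ b + T2x ^ a * T2y ^ b
        + T3x ^ a * T3y ^ b := by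
      rw [hGmexp]
      have := add_le_add (add_le_add (add_le_add (le_of_eq hone) t1) t2) t3
      convert this using 2
    have step1 : 1 ^ a * 1 ^ b + T1x ^ a * T1y ^ b ≤ (1 + T1x) ^ a * (1 + T1y) ^ b :=
      holder2 ha hb hab zero_le_one zero_le_one hT1x0 hT1y0
    have step2 : (1 + T1x) ^ a * (1 + T1y) ^ b + T2x ^ a * T2y ^ b ≤
        (1 + T1x + T2x) ^ a * (1 + T1y + T2y) ^ b := by
      have := holder2 ha hb hab (by linarith) (by linarith) hT2x0 hT2y0
        (u := 1 + T1x) (v := 1 + T1y) (u' := T2x) (v' := T2y)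
      exact this
    have step3 : (1 + T1x + T2x) ^ a * (1 + T1y + T2y) ^ b + T3x ^ a * T3y ^ b ≤
        (1 + T1x + T2x + T3x) ^ a * (1 + T1y + T2y + T3y) ^ b := by
      have := holder2 ha hb hab (by linarith) (by linarith) hT3x0 hT3y0
        (u := 1 + T1x + T2x) (v := 1 + T1y + T2y) (u' := T3x) (v' := T3y)
      exact this
    calc Gm ≤ 1 ^ a * 1 ^ b + T1x ^ a * T1y ^ b + T2x ^ a * T2y ^ b + T3x ^ a * T3y ^ b :=
          step0
      _ ≤ (1 + T1x) ^ a * (1 + T1y) ^ b + T2x ^ a * T2y ^ b + T3x ^ a * T3y ^ b := by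
          linarith [step1]
      _ ≤ (1 + T1x + T2x) ^ a * (1 + T1y + T2y) ^ b + T3x ^ a * T3y ^ b := by
          linarith [step2]
      _ ≤ (1 + T1x + T2x + T3x) ^ a * (1 + T1y + T2y + T3y) ^ b := step3
      _ = Gx ^ a * Gy ^ b := by rw [hGxexp, hGyexp]
  -- pass to logb
  have hlog2 : (0:ℝ) < Real.log 2 := Real.log_pos one_lt_two
  have main : Real.log Gm ≤ a * Real.log Gx + b * Real.log Gy := by
    calc Real.log Gm ≤ Real.log (Gx ^ a * Gy ^ b) := Real.log_le_log hGm key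
      _ = a * Real.log Gx + b * Real.log Gy := by
          rw [Real.log_mul (Real.rpow_pos_of_pos hGx a).ne' (Real.rpow_pos_of_pos hGy b).ne',
            Real.log_rpow hGx, Real.log_rpow hGy]
  simp only [Real.logb]
  calc Real.log Gm / Real.log 2 ≤ (a * Real.log Gx + b * Real.log Gy) / Real.log 2 :=
        by gcongr
    _ = a * (Real.log Gx / Real.log 2) + b * (Real.log Gy / Real.log 2) := by ring
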